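/- If a, x₁ ∈ ℂ satisfy |a|² + |x₁|² ≤ 1, then there exists x₃ ∈ ℂ with |x₃| = 1 such that (a, x₁, x₁, x₃) belongs to the closed hexablock ℍ̄. -/

import Mathlib

open Complex

noncomputable section

/-- The closed tetrablock `𝔼̄ ⊆ ℂ³`. -/
def closedTetrablock : Set (ℂ × ℂ × ℂ) :=
  {x | ‖x.1‖ ≤ 1 ∧
    0 ≤ 1 + ‖x.1‖ ^ 2 - ‖x.2.1‖ ^ 2 - ‖x.2.2‖ ^ 2
      - 2 * ‖x.1 - (starRingEnd ℂ) x.2.1 * x.2.2‖}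

/-- The closed hexablock `ℍ̄ ⊆ ℂ⁴`. -/
def closedHexablock : Set (ℂ × ℂ × ℂ × ℂ) :=
  {w | (w.2.1, w.2.2.1, w.2.2.2) ∈ closedTetrablock ∧
    ∀ z₁ z₂ : ℂ, ‖z₁‖ < 1 → ‖z₂‖ < 1 →
      ‖w.1‖ * Real.sqrt ((1 - ‖z₁‖ ^ 2) * (1 - ‖z₂‖ ^ 2)) ≤
        ‖1 - w.2.1 * z₁ - w.2.2.1 * z₂ + w.2.2.2 * z₁ * z₂‖}

/-- Cauchy–Schwarz step: if `C² = A² - B²` and `s² = 1 - v²` then `C s + v B ≤ A`. -/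
lemma hexablock_aux_cauchy (A B C s v : ℝ) (hA0 : 0 ≤ A) (hB0 : 0 ≤ B) (hC0 : 0 ≤ C)
    (hs0 : 0 ≤ s) (hv0 : 0 ≤ v) (hCsq : C ^ 2 = A ^ 2 - B ^ 2) (hssq : s ^ 2 = 1 - v ^ 2) :
    C * s + v * B ≤ A := by
  nlinarith [sq_nonneg (C * v - s * B), sq_nonneg (C * s + v * B), mul_nonneg hC0 hs0,
    mul_nonneg hv0 hB0]

/-- If `|a|² + |x₁|² ≤ 1`, then there is `x₃` with `|x₃| = 1` such that
`(a, x₁, x₁, x₃)` belongs to the closed hexablock. -/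
theorem point_in_closed_hexablock_of_ball
    (a x₁ : ℂ) (h : ‖a‖ ^ 2 + ‖x₁‖ ^ 2 ≤ 1) :
    ∃ x₃ : ℂ, ‖x₃‖ = 1 ∧ (a, x₁, x₁, x₃) ∈ closedHexablock := by
  set r : ℝ := ‖x₁‖ with hr
  have hr0 : 0 ≤ r := norm_nonneg x₁
  obtain ⟨ω, hω, hx⟩ : ∃ ω : ℂ, ‖ω‖ = 1 ∧ x₁ = (r : ℂ) * ω := by
    rcases eq_or_ne x₁ 0 with h0 | h0
    · exact ⟨1, by simp, by simp [h0, hr]⟩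
    · refine ⟨x₁ / (r : ℂ), ?_, ?_⟩
      · rw [norm_div, Complex.norm_real, Real.norm_eq_abs, _root_.abs_of_nonneg hr0, ← hr,
          div_self (by simpa [hr] using h0)]
      · rw [mul_div_cancel₀]
        exact_mod_cast fun hc => h0 (by simpa [hr] using hc)
  have h1 : (starRingEnd ℂ) ω * ω = 1 := by
    rw [Complex.conj_mul']; simp [hω]
  have h2 : x₁ - (starRingEnd ℂ) x₁ * ω ^ 2 = 0 := by
    rw [hx, map_mul, Complex.conj_ofReal]
    linear_combination (-(r : ℂ) * ω) * h1
  have hr1 : r ^ 2 ≤ 1 := le_trans (le_add_of_nonneg_left (sq_nonneg _)) h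
  have hrle : r ≤ 1 := by nlinarith
  have ha2 : ‖a‖ ^ 2 ≤ 1 - r ^ 2 := by linarith
  refine ⟨ω ^ 2, by rw [norm_pow, hω]; norm_num, ?_, ?_⟩
  · constructor
    · simpa [hr] using hrle
    · simp only [h2, norm_zero, norm_pow, hω]
      norm_num
  · intro z₁ z₂ hz₁ hz₂
    set u : ℝ := ‖z₁‖ with hu
    set v : ℝ := ‖z₂‖ with hv
    have hu0 : 0 ≤ u := norm_nonneg z₁
    have hv0 : 0 ≤ v := norm_nonneg z₂
    have hu1 : u ^ 2 ≤ 1 := by nlinarith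
    have hv1 : v ^ 2 ≤ 1 := by nlinarith
    set w₁ : ℂ := ω * z₁ with hw₁
    set w₂ : ℂ := ω * z₂ with hw₂
    have hw₁u : ‖w₁‖ = u := by rw [hw₁, norm_mul, hω, one_mul]
    have hw₂v : ‖w₂‖ = v := by rw [hw₂, norm_mul, hω, one_mul]
    have key : 1 - x₁ * z₁ - x₁ * z₂ + ω ^ 2 * z₁ * z₂
        = (1 - (r : ℂ) * w₁) - w₂ * ((r : ℂ) - w₁) := by
      rw [hx, hw₁, hw₂]; ring
    set A : ℝ := ‖1 - (r : ℂ) * w₁‖ with hA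
    set B : ℝ := ‖(r : ℂ) - w₁‖ with hB
    have hA0 : 0 ≤ A := norm_nonneg _
    have hB0 : 0 ≤ B := norm_nonneg _
    -- A² - B² = (1 - r²)(1 - u²)
    have hAsq : A ^ 2 = (1 - r * w₁.re) ^ 2 + (r * w₁.im) ^ 2 := by
      rw [hA, Complex.sq_norm, Complex.normSq_apply]
      simp [Complex.sub_re, Complex.sub_im, Complex.mul_re, Complex.mul_im]
      ring
    have hBsq : B ^ 2 = (r - w₁.re) ^ 2 + w₁.im ^ 2 := by
      rw [hB, Complex.sq_norm, Complex.normSq_apply]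
      simp [Complex.sub_re, Complex.sub_im]
      ring
    have husq : u ^ 2 = w₁.re ^ 2 + w₁.im ^ 2 := by
      rw [← hw₁u, Complex.sq_norm, Complex.normSq_apply]; ring
    have hAB : A ^ 2 - B ^ 2 = (1 - r ^ 2) * (1 - u ^ 2) := by
      linear_combination hAsq - hBsq + (1 - r ^ 2) * husq
    have hABnn : 0 ≤ A ^ 2 - B ^ 2 := by
      rw [hAB]; exact mul_nonneg (by linarith) (by linarith)
    set C : ℝ := Real.sqrt (A ^ 2 - B ^ 2) with hC
    have hC0 : 0 ≤ C := Real.sqrt_nonneg _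
    have hCsq : C ^ 2 = A ^ 2 - B ^ 2 := by rw [hC]; exact Real.sq_sqrt hABnn
    set s : ℝ := Real.sqrt (1 - v ^ 2) with hs
    have hs0 : 0 ≤ s := Real.sqrt_nonneg _
    have hssq : s ^ 2 = 1 - v ^ 2 := by rw [hs]; exact Real.sq_sqrt (by linarith)
    -- step 1 : |a| * √(1-u²) ≤ C
    have step1 : ‖a‖ * Real.sqrt (1 - u ^ 2) ≤ C := by
      have e1 : ‖a‖ * Real.sqrt (1 - u ^ 2)
          = Real.sqrt (‖a‖ ^ 2 * (1 - u ^ 2)) := by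
        rw [Real.sqrt_mul (sq_nonneg _), Real.sqrt_sq (norm_nonneg a)]
      rw [e1, hC, hAB]
      exact Real.sqrt_le_sqrt (mul_le_mul_of_nonneg_right ha2 (by linarith))
    -- step 2 : Cauchy–Schwarz
    have step2 : C * s + v * B ≤ A :=
      hexablock_aux_cauchy A B C s v hA0 hB0 hC0 hs0 hv0 hCsq hssq
    -- step 3 : A - v * B ≤ |expr|
    have step3 : A - v * B ≤ ‖1 - x₁ * z₁ - x₁ * z₂ + ω ^ 2 * z₁ * z₂‖ := by
      rw [key]
      have := norm_sub_norm_le (1 - (r : ℂ) * w₁) (w₂ * ((r : ℂ) - w₁))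
      rwa [norm_mul, hw₂v] at this
    have hsplit : Real.sqrt ((1 - u ^ 2) * (1 - v ^ 2))
        = Real.sqrt (1 - u ^ 2) * s := by
      rw [hs, Real.sqrt_mul (by linarith)]
    calc ‖a‖ * Real.sqrt ((1 - u ^ 2) * (1 - v ^ 2))
        = (‖a‖ * Real.sqrt (1 - u ^ 2)) * s := by rw [hsplit]; ring
      _ ≤ C * s := mul_le_mul_of_nonneg_right step1 hs0
      _ ≤ A - v * B := by linarith
      _ ≤ _ := step3
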